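/- Let H be a finite tree on vertex set contained in {1,...,n} with connection coefficients φ on its directed edges, and fix a root r. Define b_H = ∑_{u vertex of H} φ_{Λ(u,r)} u_u and f_H = ∑_{u vertex of H} φ_{Λ(r,u)} u_u, where φ_{Λ(u,r)} is the product of the φ along the unique path from u to r (and φ_{Λ(r,u)} the product along the path from r to u). Then within the span V of the basis vectors corresponding to the vertices of H, the orthogonal complement of the span of {α_{ij} = u_i − φ_{ij} u_j : (i,j) edge of H} is one-dimensional and spanned by b_H, and the orthogonal complement of the span of {e_{ij} = u_i − φ_{ji} u_j : (i,j) edge} is one-dimensional and spanned by f_H. -/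

import Mathlib

open scoped RealInnerProductSpace

/-- Let `H` be a tree with `m` edges embedded (via an injection `ι`) in the
vertex set `Fin n`, rooted at `r`, with connection `φ`, and let `V ⊆ ℝ^n` be the span of the
basis vectors corresponding to the vertices of `H`. Let `Φ v` be the product of `φ` along the
path from the root to `v`, and set `b = ∑_v (Φ v)⁻¹ • u_{ι v}`, `f = ∑_v (Φ v) • u_{ι v}`
(so that the coefficients are the path products `φ_{Λ(v,r)}`, resp. `φ_{Λ(r,v)}`). Then the
orthogonal complement within `V` of the span of the `α`-vectors of the edges is spanned by
`b`, and that of the span of the `e`-vectors is spanned by `f`. -/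
lemma mem_orthogonal_span_of_forall {E : Type*} [NormedAddCommGroup E]
    [InnerProductSpace ℝ E] {S : Set E} {x : E}
    (h : ∀ s ∈ S, ⟪s, x⟫ = 0) : x ∈ (Submodule.span ℝ S)ᗮ := by
  rw [Submodule.mem_orthogonal]
  intro u hu
  induction hu using Submodule.span_induction with
  | mem s hs => exact h s hs
  | zero => simp
  | add _ _ _ _ h1 h2 => rw [inner_add_left, h1, h2, add_zero]
  | smul c _ _ h1 => rw [inner_smul_left, h1, mul_zero]

lemma tree_oc_half (n m : ℕ) (ι : Fin (m + 1) → Fin n)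
    (hι : Function.Injective ι)
    (r : Fin (m + 1)) (par : Fin (m + 1) → Fin (m + 1)) (dep : Fin (m + 1) → ℕ)
    (hdep : ∀ v, v ≠ r → dep v = dep (par v) + 1)
    (φ : Fin (m + 1) → Fin (m + 1) → ℝ)
    (hφnz : ∀ i j, φ i j ≠ 0)
    (Φ : Fin (m + 1) → ℝ) (hΦr : Φ r = 1) (hΦ : ∀ v, v ≠ r → Φ v = Φ (par v) * φ (par v) v)
    (V : Submodule ℝ (EuclideanSpace ℝ (Fin n)))
    (hV : V = Submodule.span ℝ (Set.range fun v : Fin (m + 1) =>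
      EuclideanSpace.single (ι v) (1 : ℝ)))
    (α : {v : Fin (m + 1) // v ≠ r} → EuclideanSpace ℝ (Fin n))
    (hα : ∀ v, α v = EuclideanSpace.single (ι (par v.1)) (1 : ℝ)
      - φ (par v.1) v.1 • EuclideanSpace.single (ι v.1) (1 : ℝ))
    (b : EuclideanSpace ℝ (Fin n))
    (hb : b = ∑ v : Fin (m + 1), (Φ v)⁻¹ • EuclideanSpace.single (ι v) (1 : ℝ)) :
    (Submodule.span ℝ (Set.range α))ᗮ ⊓ V = Submodule.span ℝ {b} := by
  -- Φ never vanishes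
  have hΦnz : ∀ v, Φ v ≠ 0 := by
    have key : ∀ k v, dep v ≤ k → Φ v ≠ 0 := by
      intro k
      induction k with
      | zero =>
        intro v hv
        by_cases h : v = r
        · subst h; rw [hΦr]; exact one_ne_zero
        · rw [hdep v h] at hv; omega
      | succ k ih =>
        intro v hv
        by_cases h : v = r
        · subst h; rw [hΦr]; exact one_ne_zero
        · rw [hΦ v h]
          have hd := hdep v h
          exact mul_ne_zero (ih (par v) (by omega)) (hφnz _ _)
    intro v; exact key (dep v) v le_rfl
  -- evaluation of a coefficient sum
  have heval : ∀ (c : Fin (m + 1) → ℝ) (w : Fin (m + 1)),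
      (∑ v : Fin (m + 1), c v • EuclideanSpace.single (ι v) (1 : ℝ)) (ι w) = c w := by
    intro c w
    rw [WithLp.ofLp_sum, Finset.sum_apply]
    rw [Finset.sum_eq_single w]
    · simp [EuclideanSpace.single_apply]
    · intro v _ hvw
      have hne : ι w ≠ ι v := fun h => hvw (hι h).symm
      simp [EuclideanSpace.single_apply, hne]
    · simp
  apply le_antisymm
  · -- ⊆
    intro x hx
    rw [Submodule.mem_inf] at hx
    obtain ⟨hxo, hxV⟩ := hx
    rw [hV, Submodule.mem_span_range_iff_exists_fun] at hxV
    obtain ⟨c, hc⟩ := hxV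
    -- orthogonality gives the recursion
    have hrec : ∀ v : Fin (m + 1), v ≠ r → c (par v) = φ (par v) v * c v := by
      intro v hv
      have h0 : ⟪α ⟨v, hv⟩, x⟫ = 0 :=
        Submodule.inner_right_of_mem_orthogonal
          (Submodule.subset_span (Set.mem_range_self _)) hxo
      rw [hα, ← hc] at h0
      simp only [inner_sub_left, inner_smul_left, RCLike.star_def, conj_trivial] at h0
      have h1 : ⟪EuclideanSpace.single (ι (par v)) (1 : ℝ),
          (∑ u : Fin (m + 1), c u • EuclideanSpace.single (ι u) (1 : ℝ))⟫ = c (par v) := by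
        rw [EuclideanSpace.inner_single_left]; simp [heval c (par v)]
      have h2 : ⟪EuclideanSpace.single (ι v) (1 : ℝ),
          (∑ u : Fin (m + 1), c u • EuclideanSpace.single (ι u) (1 : ℝ))⟫ = c v := by
        rw [EuclideanSpace.inner_single_left]; simp [heval c v]
      rw [h1, h2] at h0
      linarith
    have hcv : ∀ v, c v = c r * (Φ v)⁻¹ := by
      have key : ∀ k v, dep v ≤ k → c v = c r * (Φ v)⁻¹ := by
        intro k
        induction k with
        | zero =>
          intro v hv
          by_cases h : v = r
          · subst h; rw [hΦr]; ring
          · rw [hdep v h] at hv; omega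
        | succ k ih =>
          intro v hv
          by_cases h : v = r
          · subst h; rw [hΦr]; ring
          · have h1 := hrec v h
            have h2 : c v = c (par v) * (φ (par v) v)⁻¹ := by
              field_simp [hφnz (par v) v] at h1 ⊢
              linarith
            have hd := hdep v h
            rw [h2, ih (par v) (by omega), hΦ v h, mul_inv]
            ring
      intro v; exact key (dep v) v le_rfl
    rw [Submodule.mem_span_singleton]
    refine ⟨c r, ?_⟩
    rw [hb, Finset.smul_sum, ← hc]
    apply Finset.sum_congr rfl
    intro v _
    rw [hcv v, mul_smul]
  · -- ⊇
    rw [Submodule.span_le, Set.singleton_subset_iff]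
    refine ⟨?_, ?_⟩
    · apply mem_orthogonal_span_of_forall
      rintro s ⟨v, rfl⟩
      rw [hα, hb]
      simp only [inner_sub_left, inner_smul_left, RCLike.star_def, conj_trivial,
        EuclideanSpace.inner_single_left, one_mul]
      rw [heval (fun v => (Φ v)⁻¹) (par v.1), heval (fun v => (Φ v)⁻¹) v.1]
      rw [hΦ v.1 v.2, mul_inv, mul_comm ((Φ (par v.1))⁻¹), ← mul_assoc,
        mul_inv_cancel₀ (hφnz (par v.1) v.1), one_mul, sub_self]
    · rw [hb, hV]
      apply Submodule.sum_mem
      intro v _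
      exact Submodule.smul_mem _ _ (Submodule.subset_span (Set.mem_range_self v))


theorem tree_orthogonal_complement (n m : ℕ) (ι : Fin (m + 1) → Fin n)
    (hι : Function.Injective ι)
    (r : Fin (m + 1)) (par : Fin (m + 1) → Fin (m + 1)) (dep : Fin (m + 1) → ℕ)
    (hroot : par r = r) (hdep : ∀ v, v ≠ r → dep v = dep (par v) + 1)
    (φ : Fin (m + 1) → Fin (m + 1) → ℝ)
    (hφnz : ∀ i j, φ i j ≠ 0) (hφinv : ∀ i j, φ j i = (φ i j)⁻¹)
    (Φ : Fin (m + 1) → ℝ) (hΦr : Φ r = 1) (hΦ : ∀ v, v ≠ r → Φ v = Φ (par v) * φ (par v) v)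
    (V : Submodule ℝ (EuclideanSpace ℝ (Fin n)))
    (hV : V = Submodule.span ℝ (Set.range fun v : Fin (m + 1) =>
      EuclideanSpace.single (ι v) (1 : ℝ)))
    (α e : {v : Fin (m + 1) // v ≠ r} → EuclideanSpace ℝ (Fin n))
    (hα : ∀ v, α v = EuclideanSpace.single (ι (par v.1)) (1 : ℝ)
      - φ (par v.1) v.1 • EuclideanSpace.single (ι v.1) (1 : ℝ))
    (he : ∀ v, e v = EuclideanSpace.single (ι (par v.1)) (1 : ℝ)
      - φ v.1 (par v.1) • EuclideanSpace.single (ι v.1) (1 : ℝ))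
    (b f : EuclideanSpace ℝ (Fin n))
    (hb : b = ∑ v : Fin (m + 1), (Φ v)⁻¹ • EuclideanSpace.single (ι v) (1 : ℝ))
    (hf : f = ∑ v : Fin (m + 1), (Φ v) • EuclideanSpace.single (ι v) (1 : ℝ)) :
    (Submodule.span ℝ (Set.range α))ᗮ ⊓ V = Submodule.span ℝ {b}
      ∧ (Submodule.span ℝ (Set.range e))ᗮ ⊓ V = Submodule.span ℝ {f} := by
  constructor
  · exact tree_oc_half n m ι hι r par dep hdep φ hφnz Φ hΦr hΦ V hV α hα b hb
  · refine tree_oc_half n m ι hι r par dep hdep (fun i j => φ j i)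
      (fun i j => hφnz j i) (fun v => (Φ v)⁻¹) (by beta_reduce; rw [hΦr]; norm_num)
      (fun v hv => ?_) V hV e (fun v => by rw [he v]) f ?_
    · beta_reduce; rw [hΦ v hv, mul_inv, hφinv (par v) v]
    · rw [hf]
      exact Finset.sum_congr rfl fun v _ => by rw [inv_inv]
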